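/- Consider block variables x = (x₁,…,x_s) with x_i ∈ ℝ^{n_i} and y = (y₁,…,y_t) with y_j ∈ ℝ^{m_j}. Let F : ℝ^{n₁}×⋯×ℝ^{n_s} → ℝ and G : ℝ^{m₁}×⋯×ℝ^{m_t} → ℝ be differentiable, and let H be a proper function of (x, y) with values in ℝ ∪ {+∞}. Fix an index i, a point (x, y), already-updated prefix blocks x'_{<i} = (x'₁,…,x'_{i−1}), and τ_i > 0; suppose the map t ↦ ∇_{x_i}F(x'_{<i}, t, x_{>i}) is Lipschitz with constant μ_i. If x_i⁺ is a minimizer over ℝ^{n_i} of t ↦ H(x'_{<i}, t, x_{>i}, y) + ⟨t − x_i, ∇_{x_i}F(x'_{<i}, x_i, x_{>i})⟩ + (τ_i/2)‖t − x_i‖², then H(x'_{<i}, x_i⁺, x_{>i}, y) + F(x'_{<i}, x_i⁺, x_{>i}) ≤ H(x'_{<i}, x_i, x_{>i}, y) + F(x'_{<i}, x_i, x_{>i}) − ((τ_i − μ_i)/2)‖x_i⁺ − x_i‖². Analogously, fix an index j, a point (x, y), prefix blocks y'_{<j}, and σ_j > 0 with t ↦ ∇_{y_j}G(y'_{<j},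 t, y_{>j}) Lipschitz with constant ν_j. If y_j⁺ minimizes t ↦ H(x, y'_{<j}, t, y_{>j}) + ⟨t − y_j, ∇_{y_j}G(y'_{<j}, y_j, y_{>j})⟩ + (σ_j/2)‖t − y_j‖², then H(x, y'_{<j}, y_j⁺, y_{>j}) + G(y'_{<j}, y_j⁺, y_{>j}) ≤ H(x, y'_{<j}, y_j, y_{>j}) + G(y'_{<j}, y_j, y_{>j}) − ((σ_j − ν_j)/2)‖y_j⁺ − y_j‖². -/

import Mathlib

open scoped RealInnerProductSpace


lemma my_descent {E : Type*} [NormedAddCommGroup E] [InnerProductSpace ℝ E] [CompleteSpace E]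
    (f : E → ℝ) (g : E → E) (μ : ℝ)
    (hg : ∀ u, HasGradientAt f (g u) u)
    (hlip : ∀ u v, ‖g u - g v‖ ≤ μ * ‖u - v‖) (u v : E) :
    f v ≤ f u + ⟪v - u, g u⟫ + μ / 2 * ‖v - u‖ ^ 2 := by
  set h := v - u with hh
  set ψ : ℝ → ℝ := fun t => f (u + t • h) - t * ⟪h, g u⟫ - μ / 2 * t ^ 2 * ‖h‖ ^ 2 with hψ
  have hderiv : ∀ t : ℝ, HasDerivAt ψ
      (⟪g (u + t • h), h⟫ - ⟪h, g u⟫ - μ * t * ‖h‖ ^ 2) t := by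
    intro t
    have hline : HasDerivAt (fun t : ℝ => u + t • h) h t := by
      simpa using ((hasDerivAt_id t).smul_const h).const_add u
    have h1 : HasDerivAt (fun t : ℝ => f (u + t • h)) (⟪g (u + t • h), h⟫) t := by
      have := (hg (u + t • h)).hasFDerivAt.comp_hasDerivAt t hline
      simp [InnerProductSpace.toDual_apply_apply] at this
      exact this
    have h2 : HasDerivAt (fun t : ℝ => t * ⟪h, g u⟫) (⟪h, g u⟫) t := by
      simpa using (hasDerivAt_id t).mul_const (⟪h, g u⟫)
    have h3 : HasDerivAt (fun t : ℝ => μ / 2 * t ^ 2 * ‖h‖ ^ 2) (μ * t * ‖h‖ ^ 2) t := by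
      have hp : HasDerivAt (fun t : ℝ => t ^ 2) (2 * t) t := by
        simpa using hasDerivAt_pow 2 t
      have := ((hp.const_mul (μ / 2)).mul_const (‖h‖ ^ 2))
      refine this.congr_deriv ?_
      ring
    exact (h1.sub h2).sub h3
  have hanti : AntitoneOn ψ (Set.Icc 0 1) := by
    apply antitoneOn_of_deriv_nonpos (convex_Icc 0 1)
    · exact (Differentiable.continuous fun t => (hderiv t).differentiableAt).continuousOn
    · intro t ht
      exact ((hderiv t).differentiableAt).differentiableWithinAt
    · intro t ht
      rw [interior_Icc] at ht
      rw [(hderiv t).deriv]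
      have hb : ⟪g (u + t • h) - g u, h⟫ ≤ μ * t * ‖h‖ ^ 2 := by
        calc ⟪g (u + t • h) - g u, h⟫ ≤ ‖g (u + t • h) - g u‖ * ‖h‖ :=
              real_inner_le_norm _ _
          _ ≤ (μ * ‖(u + t • h) - u‖) * ‖h‖ :=
              mul_le_mul_of_nonneg_right (hlip _ _) (norm_nonneg _)
          _ = μ * t * ‖h‖ ^ 2 := by
              rw [add_sub_cancel_left, norm_smul, Real.norm_eq_abs,
                abs_of_pos ht.1]; ring
      have hsplit : ⟪g (u + t • h), h⟫ - ⟪h, g u⟫ = ⟪g (u + t • h) - g u, h⟫ := by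
        rw [real_inner_comm (g u) h, ← inner_sub_left]
      linarith [hsplit.le, hsplit.ge]
  have key := hanti (Set.left_mem_Icc.2 one_pos.le) (Set.right_mem_Icc.2 one_pos.le) one_pos.le
  simp only [hψ] at key
  have huv : u + (1 : ℝ) • h = v := by simp [hh]
  rw [huv] at key
  norm_num at key
  linarith [key]

lemma my_ereal_step (A B : EReal) (hA : A ≠ ⊥) (hB : B ≠ ⊥) (a c d : ℝ)
    (h : A + (a : EReal) ≤ B) (hcd : c - d ≤ a) :
    A + (c : EReal) ≤ B + (d : EReal) := by
  rcases eq_or_ne B ⊤ with hBt | hBt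
  · rw [hBt, EReal.top_add_of_ne_bot (by exact_mod_cast EReal.coe_ne_bot d)]
    exact le_top
  · lift B to ℝ using ⟨hBt, hB⟩
    have hAt : A ≠ ⊤ := by
      intro hA'
      rw [hA', EReal.top_add_of_ne_bot (EReal.coe_ne_bot a)] at h
      simp at h
    lift A to ℝ using ⟨hAt, hA⟩
    rw [← EReal.coe_add, ← EReal.coe_add, EReal.coe_le_coe_iff]
    rw [← EReal.coe_add, EReal.coe_le_coe_iff] at h
    linarith

/-- Per-block descent inequalities of the eASAP algorithm: one proximal
step on `H` with a linearization of `F` (resp. `G`) on the `i`-th `x`-block (resp. the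
`j`-th `y`-block), with already-updated prefix blocks. -/
theorem stmt_4 {s t : ℕ} (n : Fin s → ℕ) (m : Fin t → ℕ)
    (F : ((l : Fin s) → EuclideanSpace ℝ (Fin (n l))) → ℝ)
    (G : ((l : Fin t) → EuclideanSpace ℝ (Fin (m l))) → ℝ)
    (H : ((l : Fin s) → EuclideanSpace ℝ (Fin (n l))) →
         ((l : Fin t) → EuclideanSpace ℝ (Fin (m l))) → EReal)
    (hHproper : ∃ p q, H p q ≠ ⊤) (hHnobot : ∀ p q, H p q ≠ ⊥)
    (x x' : (l : Fin s) → EuclideanSpace ℝ (Fin (n l)))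
    (y y' : (l : Fin t) → EuclideanSpace ℝ (Fin (m l)))
    (i : Fin s) (j : Fin t)
    (τi σj μi νj : ℝ) (hτi : 0 < τi) (hσj : 0 < σj)
    -- the base points with already-updated prefix blocks
    (bx : (l : Fin s) → EuclideanSpace ℝ (Fin (n l)))
    (hbx : bx = fun l => if l < i then x' l else x l)
    (cy : (l : Fin t) → EuclideanSpace ℝ (Fin (m l)))
    (hcy : cy = fun l => if l < j then y' l else y l)
    -- partial gradients of F and G in the i-th (resp. j-th) block
    (gFi : EuclideanSpace ℝ (Fin (n i)) → EuclideanSpace ℝ (Fin (n i)))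
    (gGj : EuclideanSpace ℝ (Fin (m j)) → EuclideanSpace ℝ (Fin (m j)))
    (hgF : ∀ u, HasGradientAt (fun v => F (Function.update bx i v)) (gFi u) u)
    (hgFlip : ∀ u v, ‖gFi u - gFi v‖ ≤ μi * ‖u - v‖)
    (hgG : ∀ u, HasGradientAt (fun v => G (Function.update cy j v)) (gGj u) u)
    (hgGlip : ∀ u v, ‖gGj u - gGj v‖ ≤ νj * ‖u - v‖)
    (xiplus : EuclideanSpace ℝ (Fin (n i)))
    (yjplus : EuclideanSpace ℝ (Fin (m j)))
    (hxmin : ∀ u, H (Function.update bx i xiplus) y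
        + ((⟪xiplus - x i, gFi (x i)⟫ + τi / 2 * ‖xiplus - x i‖ ^ 2 : ℝ) : EReal)
      ≤ H (Function.update bx i u) y
        + ((⟪u - x i, gFi (x i)⟫ + τi / 2 * ‖u - x i‖ ^ 2 : ℝ) : EReal))
    (hymin : ∀ u, H x (Function.update cy j yjplus)
        + ((⟪yjplus - y j, gGj (y j)⟫ + σj / 2 * ‖yjplus - y j‖ ^ 2 : ℝ) : EReal)
      ≤ H x (Function.update cy j u)
        + ((⟪u - y j, gGj (y j)⟫ + σj / 2 * ‖u - y j‖ ^ 2 : ℝ) : EReal)) :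
    (H (Function.update bx i xiplus) y + ((F (Function.update bx i xiplus) : ℝ) : EReal)
      ≤ H bx y + ((F bx - (τi - μi) / 2 * ‖xiplus - x i‖ ^ 2 : ℝ) : EReal))
    ∧ (H x (Function.update cy j yjplus) + ((G (Function.update cy j yjplus) : ℝ) : EReal)
      ≤ H x cy + ((G cy - (σj - νj) / 2 * ‖yjplus - y j‖ ^ 2 : ℝ) : EReal)) := by
  constructor
  · -- x-block
    have hbi : bx i = x i := by rw [hbx]; simp
    have hupd : Function.update bx i (x i) = bx := by
      rw [← hbi]; exact Function.update_eq_self i bx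
    have hmin := hxmin (x i)
    rw [hupd] at hmin
    simp only [sub_self, inner_zero_left, norm_zero, zero_add, mul_zero, add_zero,
      ne_eq, OfNat.ofNat_ne_zero, not_false_eq_true, zero_pow, EReal.coe_zero] at hmin
    have hdes := my_descent (fun v => F (Function.update bx i v)) gFi μi hgF hgFlip
      (x i) xiplus
    simp only [hupd] at hdes
    exact my_ereal_step _ _ (hHnobot _ _) (hHnobot _ _) _ _ _ hmin (by linarith)
  · -- y-block
    have hcj : cy j = y j := by rw [hcy]; simp
    have hupd : Function.update cy j (y j) = cy := by
      rw [← hcj]; exact Function.update_eq_self j cy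
    have hmin := hymin (y j)
    rw [hupd] at hmin
    simp only [sub_self, inner_zero_left, norm_zero, zero_add, mul_zero, add_zero,
      ne_eq, OfNat.ofNat_ne_zero, not_false_eq_true, zero_pow, EReal.coe_zero] at hmin
    have hdes := my_descent (fun v => G (Function.update cy j v)) gGj νj hgG hgGlip
      (y j) yjplus
    simp only [hupd] at hdes
    exact my_ereal_step _ _ (hHnobot _ _) (hHnobot _ _) _ _ _ hmin (by linarith)
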